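/- Suppose E is finite dimensional and A(X,E) contains the constant functions. Let T, S : A(X,E) → C(Y,F) be jointly separating linear maps. Then the maps Λ^T, Λ^S : Y_c → L(E,F) defined by Λ^T_y(e) = T(ẽ)(y) and Λ^S_y(e) = S(ẽ)(y) (ẽ the constant function with value e) are continuous from Y_c into the space L(E,F) of bounded linear operators from E to F with the operator norm. -/

import Mathlib

open Set Filter Topology


/-- `B` together with the norm `nB` is a regular Banach function algebra on the
compact Hausdorff space `X`: it separates points (it contains the constants since it
is a subalgebra), `nB` is a complete algebra norm on `B` dominating the sup norm, and
the regularity (partition of unity) property holds. -/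
structure IsRegularBanachFunctionAlgebra {X : Type*} [TopologicalSpace X] [CompactSpace X]
    [T2Space X] (B : Subalgebra ℂ C(X, ℂ)) (nB : C(X, ℂ) → ℝ) : Prop where
  separates : ∀ x y : X, x ≠ y → ∃ f ∈ B, f x ≠ f y
  norm_nonneg : ∀ f ∈ B, 0 ≤ nB f
  norm_add_le : ∀ f ∈ B, ∀ g ∈ B, nB (f + g) ≤ nB f + nB g
  norm_smul : ∀ (c : ℂ), ∀ f ∈ B, nB (c • f) = ‖c‖ * nB f
  norm_eq_zero_iff : ∀ f ∈ B, (nB f = 0 ↔ f = 0)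
  norm_mul_le : ∀ f ∈ B, ∀ g ∈ B, nB (f * g) ≤ nB f * nB g
  sup_norm_le : ∀ f ∈ B, ‖f‖ ≤ nB f
  complete : ∀ u : ℕ → C(X, ℂ), (∀ n, u n ∈ B) →
    (∀ ε : ℝ, 0 < ε → ∃ N : ℕ, ∀ m ≥ N, ∀ n ≥ N, nB (u m - u n) < ε) →
    ∃ l ∈ B, ∀ ε : ℝ, 0 < ε → ∃ N : ℕ, ∀ n ≥ N, nB (u n - l) < ε
  regular : ∀ K : Set X, IsCompact K → ∀ (n : ℕ) (U : Fin n → Set X),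
    (∀ i, IsOpen (U i)) → K ⊆ ⋃ i, U i →
    ∃ g : Fin n → C(X, ℂ), (∀ i, g i ∈ B) ∧ (∀ i, closure {x | g i x ≠ 0} ⊆ U i) ∧
      ∀ x ∈ K, (∑ i, g i x) = 1

variable {X Y E F : Type*} [TopologicalSpace X] [CompactSpace X] [T2Space X]
  [TopologicalSpace Y] [CompactSpace Y] [T2Space Y]
  [NormedAddCommGroup E] [NormedSpace ℂ E] [CompleteSpace E]
  [NormedAddCommGroup F] [NormedSpace ℂ F] [CompleteSpace F]
  (A : Submodule ℂ C(X, E))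

/-- The cozero set of a function in the subspace `A = A(X,E)` of `C(X,E)`. -/
def coz (f : ↥A) : Set X := {x | (f : C(X, E)) x ≠ 0}

/-- `T, S : A(X,E) → C(Y,F)` are jointly separating: `coz(Tf) ∩ coz(Sg) = ∅` whenever
`coz(f) ∩ coz(g) = ∅`. -/
def JointlySeparatingV (T S : ↥A →ₗ[ℂ] C(Y, F)) : Prop :=
  ∀ f g : ↥A, coz A f ∩ coz A g = ∅ → {y | T f y ≠ 0} ∩ {y | S g y ≠ 0} = ∅

/-- The set `Y₁ = (⋃_f coz(Tf)) ∩ (⋃_f coz(Sf))`. -/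
def Y1V (T S : ↥A →ₗ[ℂ] C(Y, F)) : Set Y :=
  {y | (∃ f : ↥A, T f y ≠ 0) ∧ (∃ f : ↥A, S f y ≠ 0)}

/-- For `v* ∈ F*`, the set `Y₁^{v*} = (⋃_f coz(v*∘Tf)) ∩ (⋃_f coz(v*∘Sf))`. -/
def Y1v (T S : ↥A →ₗ[ℂ] C(Y, F)) (v : F →L[ℂ] ℂ) : Set Y :=
  {y | (∃ f : ↥A, v (T f y) ≠ 0) ∧ (∃ f : ↥A, v (S f y) ≠ 0)}

/-- `x` is a support point of `y` for the pair of (scalar-valued) maps `T', S'`. -/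
def IsSupportPointFor (T' S' : ↥A → Y → ℂ) (y : Y) (x : X) : Prop :=
  ∀ V ∈ 𝓝 x, ∃ f : ↥A, coz A f ⊆ V ∧ (T' f y ≠ 0 ∨ S' f y ≠ 0)

/-- The set `Y_c` of points `y ∈ Y₁` such that `f ↦ Tf(y)` and `f ↦ Sf(y)` are
sup-norm continuous from `A(X,E)` into `F` with its weak topology. -/
def YcV (T S : ↥A →ₗ[ℂ] C(Y, F)) : Set Y :=
  {y ∈ Y1V A T S | Continuous (fun f : ↥A => toWeakSpace ℂ F (T f y)) ∧
    Continuous (fun f : ↥A => toWeakSpace ℂ F (S f y))}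

section Aux


variable {Y E F : Type*} [TopologicalSpace Y]
  [NormedAddCommGroup E] [NormedSpace ℂ E] [FiniteDimensional ℂ E]
  [NormedAddCommGroup F] [NormedSpace ℂ F]

/-- `Basis.constrL` as a continuous linear map in the family of values. -/
noncomputable def constrCLM {ι : Type*} [Fintype ι] (b : Module.Basis ι ℂ E) :
    (ι → F) →L[ℂ] (E →L[ℂ] F) :=
  LinearMap.mkContinuous
    { toFun := fun f => b.constrL f
      map_add' := fun f g => by
        ext e
        simp [Module.Basis.constrL_apply, smul_add, Finset.sum_add_distrib]
      map_smul' := fun c f => by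
        ext e
        simp [Module.Basis.constrL_apply, Finset.smul_sum, smul_comm c] }
    (∑ i, ‖LinearMap.toContinuousLinearMap (b.coord i)‖)
    (by
      intro f
      apply ContinuousLinearMap.opNorm_le_bound _
        (mul_nonneg (Finset.sum_nonneg fun i _ => norm_nonneg _) (norm_nonneg f))
      intro e
      simp only [LinearMap.coe_mk, AddHom.coe_mk, Module.Basis.constrL_apply]
      calc ‖∑ i, b.equivFun e i • f i‖ ≤ ∑ i, ‖b.equivFun e i • f i‖ := norm_sum_le _ _
        _ ≤ ∑ i, (‖LinearMap.toContinuousLinearMap (b.coord i)‖ * ‖e‖) * ‖f‖ := by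
            apply Finset.sum_le_sum
            intro i _
            rw [norm_smul]
            have h1 : ‖b.equivFun e i‖ ≤ ‖LinearMap.toContinuousLinearMap (b.coord i)‖ * ‖e‖ := by
              have := (LinearMap.toContinuousLinearMap (b.coord i)).le_opNorm e
              simpa [Module.Basis.equivFun_apply, Module.Basis.coord_apply] using this
            exact mul_le_mul h1 (norm_le_pi_norm f i) (norm_nonneg _)
              (mul_nonneg (norm_nonneg _) (norm_nonneg _))
        _ = (∑ i, ‖LinearMap.toContinuousLinearMap (b.coord i)‖) * ‖f‖ * ‖e‖ := by
            rw [Finset.sum_mul, Finset.sum_mul]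
            congr 1; ext i; ring)

theorem continuousOn_of_agree (s : Set Y) (G : E → Y → F)
    (hGcont : ∀ e, Continuous (G e))
    (hadd : ∀ e e' y, G (e + e') y = G e y + G e' y)
    (hsmul : ∀ (c : ℂ) e y, G (c • e) y = c • G e y)
    (Λ : Y → E →L[ℂ] F) (h : ∀ y ∈ s, ∀ e, Λ y e = G e y) :
    ContinuousOn Λ s := by
  classical
  let b := Module.finBasis ℂ E
  have hΦ : Continuous (fun y => constrCLM b (fun i => G (b i) y)) :=
    (constrCLM b).continuous.comp (continuous_pi fun i => hGcont (b i))
  refine hΦ.continuousOn.congr ?_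
  intro y hy
  ext e
  rw [h y hy e]
  let Gy : E →ₗ[ℂ] F :=
    { toFun := fun e => G e y
      map_add' := fun a c => hadd a c y
      map_smul' := fun c a => hsmul c a y }
  have : constrCLM b (fun i => G (b i) y) e = Gy (∑ i, b.equivFun e i • b i) := by
    rw [map_sum]
    simp [constrCLM, LinearMap.mkContinuous_apply, Module.Basis.constrL_apply, Gy]
  rw [this, b.sum_equivFun]

  rfl

end Aux

/-- **Theorem 4.5 (i).** Suppose `E` is finite dimensional and `A(X,E)` contains the
constants.  For jointly separating `T, S : A(X,E) → C(Y,F)`, the maps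
`Λᵀ, Λˢ : Y_c → L(E,F)`, `Λᵀ_y(e) = T(ẽ)(y)` and `Λˢ_y(e) = S(ẽ)(y)`, are continuous
into `L(E,F)` with the operator norm. -/
theorem representing_operators_continuous
    [FiniteDimensional ℂ E]
    (B : Subalgebra ℂ C(X, ℂ)) (nB : C(X, ℂ) → ℝ)
    (hB : IsRegularBanachFunctionAlgebra B nB)
    (hmod : ∀ g ∈ B, ∀ f : ↥A, g • (f : C(X, E)) ∈ A)
    (hconst : ∀ e : E, ContinuousMap.const X e ∈ A)
    (T S : ↥A →ₗ[ℂ] C(Y, F)) (hTS : JointlySeparatingV A T S) :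
    (∀ ΛT : Y → (E →L[ℂ] F),
      (∀ y ∈ YcV A T S, ∀ e : E, ΛT y e = T ⟨ContinuousMap.const X e, hconst e⟩ y) →
      ContinuousOn ΛT (YcV A T S)) ∧
    (∀ ΛS : Y → (E →L[ℂ] F),
      (∀ y ∈ YcV A T S, ∀ e : E, ΛS y e = S ⟨ContinuousMap.const X e, hconst e⟩ y) →
      ContinuousOn ΛS (YcV A T S)) := by
  constructor
  · intro L hL
    refine continuousOn_of_agree _ (fun e y => T ⟨ContinuousMap.const X e, hconst e⟩ y) ?_ ?_ ?_ L hL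
    · intro e; exact (T _).continuous
    · intro e e' y
      have : (⟨ContinuousMap.const X (e + e'), hconst _⟩ : ↥A)
          = ⟨ContinuousMap.const X e, hconst _⟩ + ⟨ContinuousMap.const X e', hconst _⟩ := by
        apply Subtype.ext; ext x; simp
      simp only [this, map_add, ContinuousMap.add_apply]
    · intro c e y
      have : (⟨ContinuousMap.const X (c • e), hconst _⟩ : ↥A)
          = c • (⟨ContinuousMap.const X e, hconst _⟩ : ↥A) := by
        apply Subtype.ext; ext x; simp
      simp only [this, map_smul, ContinuousMap.smul_apply]
  · intro L hL
    refine continuousOn_of_agree _ (fun e y => S ⟨ContinuousMap.const X e, hconst e⟩ y) ?_ ?_ ?_ L hL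
    · intro e; exact (S _).continuous
    · intro e e' y
      have : (⟨ContinuousMap.const X (e + e'), hconst _⟩ : ↥A)
          = ⟨ContinuousMap.const X e, hconst _⟩ + ⟨ContinuousMap.const X e', hconst _⟩ := by
        apply Subtype.ext; ext x; simp
      simp only [this, map_add, ContinuousMap.add_apply]
    · intro c e y
      have : (⟨ContinuousMap.const X (c • e), hconst _⟩ : ↥A)
          = c • (⟨ContinuousMap.const X e, hconst _⟩ : ↥A) := by
        apply Subtype.ext; ext x; simp
      simp only [this, map_smul, ContinuousMap.smul_apply]
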